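/- In an n-Lie algebra g, for all x_1,...,x_{n-1}, y_1,...,y_n in g, the sum over i from 1 to n-1 of [y_1,...,y_{i-1},[x_1,...,x_{n-1},y_i],y_{i+1},...,y_{n-1},y_n] plus the sum over j from 1 to n-1 of [x_1,...,x_{j-1},[y_1,...,y_{n-1},x_j],x_{j+1},...,x_{n-1},y_n] equals zero. -/
import Mathlib


/-- In an `n`-Lie algebra (`n = m+1`) with skew-symmetric multilinear bracket `b`
satisfying the Filippov-Jacobi identity, for all `x₁,…,x_{n-1}, y₁,…,y_n`:
`Σ_{i=1}^{n-1} [y₁,…,[x₁,…,x_{n-1},y_i],…,y_{n-1},y_n]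
 + Σ_{j=1}^{n-1} [x₁,…,[y₁,…,y_{n-1},x_j],…,x_{n-1},y_n] = 0`. -/
theorem nLie_biyao {K V : Type*} [Field K] [CharZero K] [AddCommGroup V] [Module K V]
    {m : ℕ} (b : MultilinearMap K (fun _ : Fin (m + 1) => V) V)
    (halt : ∀ (v : Fin (m + 1) → V) (i j : Fin (m + 1)), i ≠ j → v i = v j → b v = 0)
    (hFJ : ∀ (x : Fin m → V) (y : Fin (m + 1) → V),
      b (Fin.snoc x (b y)) = ∑ i, b (Function.update y i (b (Fin.snoc x (y i)))))
    (x y : Fin m → V) (yn : V) :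
    (∑ i, b (Fin.snoc (Function.update y i (b (Fin.snoc x (y i)))) yn)) +
      (∑ j, b (Fin.snoc (Function.update x j (b (Fin.snoc y (x j)))) yn)) = 0 := by
  have h1 : b (Fin.snoc x (b (Fin.snoc y yn))) =
      (∑ i, b (Fin.snoc (Function.update y i (b (Fin.snoc x (y i)))) yn)) +
        b (Fin.snoc y (b (Fin.snoc x yn))) := by
    rw [hFJ, Fin.sum_univ_castSucc]
    simp [← Fin.snoc_update, Fin.update_snoc_last]
  have h2 : b (Fin.snoc y (b (Fin.snoc x yn))) =
      (∑ j, b (Fin.snoc (Function.update x j (b (Fin.snoc y (x j)))) yn)) +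
        b (Fin.snoc x (b (Fin.snoc y yn))) := by
    rw [hFJ, Fin.sum_univ_castSucc]
    simp [← Fin.snoc_update, Fin.update_snoc_last]
  have e1 := h1
  rw [h2] at e1
  -- e1 : A = S1 + (S2 + A)
  have : (∑ i, b (Fin.snoc (Function.update y i (b (Fin.snoc x (y i)))) yn)) +
      ((∑ j, b (Fin.snoc (Function.update x j (b (Fin.snoc y (x j)))) yn)) +
        b (Fin.snoc x (b (Fin.snoc y yn)))) - b (Fin.snoc x (b (Fin.snoc y yn))) = 0 := by
    rw [← e1]; abel
  rw [← this]; abel
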